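/- Let n ≥ 2. The dual cone of Γ_2 admits the explicit characterization Γ_2* = { λ ∈ Γ_n : |λ|² ≤ (1/(n−1)) (Σ_{i=1}^n λ_i)² }, where Γ_n = {λ ∈ ℝⁿ : λ_i ≥ 0 for all i} is the nonnegative orthant and |λ| is the Euclidean norm. -/

import Mathlib

open MeasureTheory Metric Filter Finset Topology Asymptotics

noncomputable section

/-- The `j`-th elementary symmetric function `S_j` on `ℝⁿ`. -/
def esymm (n j : ℕ) (lam : Fin n → ℝ) : ℝ :=
  ∑ s ∈ Finset.powersetCard j (Finset.univ : Finset (Fin n)), ∏ i ∈ s, lam i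

/-- The eigenvalue vector of a symmetric matrix (junk value `0` if not symmetric). -/
def eigs (n : ℕ) (A : Matrix (Fin n) (Fin n) ℝ) : Fin n → ℝ :=
  if h : A.IsHermitian then h.eigenvalues else 0

/-- The cone `Γ_k = {λ : S_j(λ) ≥ 0, j = 1,…,k}`. -/
def Gamma (n k : ℕ) : Set (Fin n → ℝ) :=
  {lam | ∀ j, 1 ≤ j → j ≤ k → 0 ≤ esymm n j lam}

/-- A quadratic polynomial with constant Hessian `A`. -/
def quadPoly (n : ℕ) (c : ℝ) (b : Fin n → ℝ) (A : Matrix (Fin n) (Fin n) ℝ)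
    (x : EuclideanSpace ℝ (Fin n)) : ℝ :=
  c + ∑ i, b i * x i + (1 / 2) * ∑ i, ∑ j, A i j * x i * x j

/-- Viscosity definition of `k`-convexity on an open set `Ω`. -/
def KConvex (n k : ℕ) (Ω : Set (EuclideanSpace ℝ (Fin n)))
    (u : EuclideanSpace ℝ (Fin n) → EReal) : Prop :=
  UpperSemicontinuousOn u Ω ∧
  (∀ x, u x ≠ ⊤) ∧
  (∀ x ∈ Ω, ∃ y ∈ connectedComponentIn Ω x, u y ≠ ⊥) ∧
  ∀ (c : ℝ) (b : Fin n → ℝ) (A : Matrix (Fin n) (Fin n) ℝ), A.IsHermitian →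
    ∀ x₀ ∈ Ω, u x₀ ≠ ⊥ →
      IsLocalMaxOn (fun x => u x - (quadPoly n c b A x : EReal)) Ω x₀ →
      eigs n A ∈ Gamma n k

/-- Second partial derivatives (Hessian matrix) of a function on `ℝⁿ`. -/
def hess (n : ℕ) (f : EuclideanSpace ℝ (Fin n) → ℝ) (x : EuclideanSpace ℝ (Fin n)) :
    Matrix (Fin n) (Fin n) ℝ :=
  Matrix.of fun i j =>
    fderiv ℝ (fun y => fderiv ℝ f y (EuclideanSpace.single j 1)) x (EuclideanSpace.single i 1)

lemma sq_sum_eq_sum_sq_add {ι : Type*} [DecidableEq ι] (s : Finset ι) (f : ι → ℝ) :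
    (∑ i ∈ s, f i) ^ 2 = ∑ i ∈ s, f i ^ 2 + 2 * ∑ t ∈ s.powersetCard 2, ∏ i ∈ t, f i := by
  induction s using Finset.induction with
  | empty => rw [Finset.powersetCard_eq_empty.mpr (by simp)]; simp
  | @insert a s ha ih =>
    have hdisj : Disjoint (s.powersetCard 2) ((s.powersetCard 1).image (insert a)) := by
      rw [Finset.disjoint_left]
      intro t ht ht'
      have hts := (Finset.mem_powersetCard.mp ht).1
      have hat : a ∉ t := fun h => ha (hts h)
      obtain ⟨u, hu, rfl⟩ := Finset.mem_image.mp ht'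
      exact hat (Finset.mem_insert_self a u)
    have hinj : ∀ u ∈ s.powersetCard 1, ∀ v ∈ s.powersetCard 1,
        insert a u = insert a v → u = v := by
      intro u hu v hv h
      have hau : a ∉ u := fun h' => ha ((Finset.mem_powersetCard.mp hu).1 h')
      have hav : a ∉ v := fun h' => ha ((Finset.mem_powersetCard.mp hv).1 h')
      rw [← Finset.erase_insert hau, ← Finset.erase_insert hav, h]
    have hins : ∀ u ∈ s.powersetCard 1, ∏ i ∈ insert a u, f i = f a * ∏ i ∈ u, f i := by
      intro u hu
      exact Finset.prod_insert (fun h' => ha ((Finset.mem_powersetCard.mp hu).1 h'))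
    have h1 : ∑ u ∈ s.powersetCard 1, ∏ i ∈ u, f i = ∑ i ∈ s, f i := by
      rw [Finset.powersetCard_one, Finset.sum_map]; simp
    rw [Finset.sum_insert ha, Finset.sum_insert ha,
      show (2:ℕ) = Nat.succ 1 from rfl, Finset.powersetCard_succ_insert ha 1,
      Finset.sum_union hdisj, Finset.sum_image hinj, Finset.sum_congr rfl hins,
      ← Finset.mul_sum, h1]
    linear_combination ih

lemma esymm_one' (n : ℕ) (f : Fin n → ℝ) : esymm n 1 f = ∑ i, f i := by
  unfold esymm; rw [Finset.powersetCard_one, Finset.sum_map]; simp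

lemma esymm_two' (n : ℕ) (f : Fin n → ℝ) :
    (∑ i, f i) ^ 2 = ∑ i, f i ^ 2 + 2 * esymm n 2 f :=
  sq_sum_eq_sum_sq_add _ _

set_option maxHeartbeats 1000000 in
/-- Explicit characterization of the dual cone of `Γ_2`:
`Γ_2^* = {λ ∈ Γ_n : |λ|² ≤ (Σ λᵢ)²/(n-1)}`. -/
theorem dual_gamma_two_characterization (n : ℕ) (hn : 2 ≤ n) :
    {lam : Fin n → ℝ | ∀ μ ∈ Gamma n 2, 0 ≤ ∑ i, lam i * μ i} =
    {lam : Fin n → ℝ | (∀ i, 0 ≤ lam i) ∧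
      ∑ i, lam i ^ 2 ≤ (1 / ((n : ℝ) - 1)) * (∑ i, lam i) ^ 2} := by
  have hn2 : (2:ℝ) ≤ (n:ℝ) := by exact_mod_cast hn
  have hnpos : (0:ℝ) < (n:ℝ) := by linarith
  have hm : (0:ℝ) < (n:ℝ) - 1 := by linarith
  ext lam
  simp only [Set.mem_setOf_eq]
  constructor
  · intro h
    have hpos : ∀ i, 0 ≤ lam i := by
      intro i
      have hmem : (Pi.single i 1 : Fin n → ℝ) ∈ Gamma n 2 := by
        intro j hj1 hj2
        have ha : ∑ k, (Pi.single i 1 : Fin n → ℝ) k = 1 := by simp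
        have hb : ∑ k, ((Pi.single i 1 : Fin n → ℝ) k) ^ 2 = 1 := by
          simp [Pi.single_apply]
        interval_cases j
        · rw [esymm_one', ha]; norm_num
        · have h2 := esymm_two' n (Pi.single i 1 : Fin n → ℝ)
          rw [ha, hb] at h2; linarith
      have := h _ hmem
      simpa [Pi.single_apply, mul_ite] using this
    refine ⟨hpos, ?_⟩
    set s := ∑ i, lam i with hsdef
    set q := ∑ i, lam i ^ 2 with hqdef
    have hcs : s ^ 2 ≤ (n:ℝ) * q := by
      have := sq_sum_le_card_mul_sum_sq (s := (Finset.univ : Finset (Fin n))) (f := lam)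
      simpa using this
    have hPnn : 0 ≤ q - s ^ 2 / n := by
      have : s ^ 2 / n ≤ q := by rw [div_le_iff₀ hnpos]; linarith
      linarith
    set L := Real.sqrt (q - s ^ 2 / n) with hLdef
    have hL2 : L ^ 2 = q - s ^ 2 / n := Real.sq_sqrt hPnn
    have hLnn : 0 ≤ L := Real.sqrt_nonneg _
    set c := Real.sqrt ((n:ℝ) * ((n:ℝ) - 1)) with hcdef
    have hc2 : c ^ 2 = (n:ℝ) * ((n:ℝ) - 1) := Real.sq_sqrt (by positivity)
    have hcnn : 0 ≤ c := Real.sqrt_nonneg _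
    set μ : Fin n → ℝ := fun i => L - c * (lam i - s / n) with hμdef
    have hsum : ∑ i, μ i = n * L := by
      simp only [hμdef, Finset.sum_sub_distrib, Finset.sum_const, Finset.card_univ,
        Fintype.card_fin, nsmul_eq_mul, ← Finset.mul_sum, Finset.sum_sub_distrib]
      field_simp
      rw [← hsdef]; ring
    have hsumsq : ∑ i, μ i ^ 2 = (n:ℝ) ^ 2 * L ^ 2 := by
      have expand : ∀ i, μ i ^ 2 =
          L ^ 2 - 2 * L * c * (lam i - s / n) + c ^ 2 * (lam i ^ 2 - 2 * (s/n) * lam i + (s/n)^2) := by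
        intro i; simp only [hμdef]; ring
      rw [Finset.sum_congr rfl (fun i _ => expand i)]
      simp only [Finset.sum_add_distrib, Finset.sum_sub_distrib, ← Finset.mul_sum,
        Finset.sum_const, Finset.card_univ, Fintype.card_fin, nsmul_eq_mul]
      rw [← hsdef, ← hqdef]
      rw [hL2, hc2]
      field_simp
      ring
    have hμmem : μ ∈ Gamma n 2 := by
      intro j hj1 hj2
      interval_cases j
      · rw [esymm_one', hsum]; positivity
      · have h2 := esymm_two' n μ
        rw [hsum, hsumsq] at h2
        nlinarith [h2]
    have hdual := h μ hμmem
    have hip : ∑ i, lam i * μ i = L * s - c * (q - s ^ 2 / n) := by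
      have expand : ∀ i, lam i * μ i = L * lam i - c * lam i ^ 2 + c * (s/n) * lam i := by
        intro i; simp only [hμdef]; ring
      rw [Finset.sum_congr rfl (fun i _ => expand i)]
      simp only [Finset.sum_add_distrib, Finset.sum_sub_distrib, ← Finset.mul_sum]
      rw [← hsdef, ← hqdef]
      field_simp
      ring
    rw [hip] at hdual
    have key : ((n:ℝ) - 1) * q ≤ s ^ 2 := by
      rcases eq_or_lt_of_le hLnn with hL0 | hLpos
      · have hP0 : q - s ^ 2 / n = 0 := by rw [← hL2, ← hL0]; ring
        have hq' : (n:ℝ) * q = s ^ 2 := by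
          field_simp at hP0; linarith
        nlinarith [sq_nonneg s]
      · have h1 : c * L ≤ s := by
          by_contra hcon
          push_neg at hcon
          nlinarith [hdual, hLpos]
        have h2 : c ^ 2 * L ^ 2 ≤ s ^ 2 := by
          nlinarith [h1, mul_nonneg hcnn hLnn, hLnn]
        rw [hc2, hL2] at h2
        have hns : (n:ℝ) * (s ^ 2 / n) = s ^ 2 := by field_simp
        nlinarith [h2, hns]
    rw [one_div, inv_mul_eq_div, le_div_iff₀ hm]
    linarith [key]
  · rintro ⟨hpos, hineq⟩ μ hμ
    set s := ∑ i, lam i with hsdef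
    set q := ∑ i, lam i ^ 2 with hqdef
    set t := ∑ i, μ i with htdef
    set r := ∑ i, μ i ^ 2 with hrdef
    set p := ∑ i, lam i * μ i with hpdef
    have hs : 0 ≤ s := Finset.sum_nonneg (fun i _ => hpos i)
    have ht : 0 ≤ t := by
      have := hμ 1 le_rfl (by norm_num)
      rwa [esymm_one'] at this
    have hrt : r ≤ t ^ 2 := by
      have hE := hμ 2 (by norm_num) le_rfl
      have h2 := esymm_two' n μ
      rw [← htdef, ← hrdef] at h2
      linarith [hE, h2]
    have hq : ((n:ℝ) - 1) * q ≤ s ^ 2 := by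
      have hinv : ((n:ℝ) - 1) * (1 / ((n:ℝ) - 1)) = 1 := by field_simp
      nlinarith [hineq, hm, sq_nonneg s]
    have hA : 0 ≤ (n:ℝ) * q - s ^ 2 := by
      have := sq_sum_le_card_mul_sum_sq (s := (Finset.univ : Finset (Fin n))) (f := lam)
      simp only [Finset.card_univ, Fintype.card_fin] at this
      rw [← hsdef, ← hqdef] at this
      push_cast at this ⊢
      linarith
    have hB : 0 ≤ (n:ℝ) * r - t ^ 2 := by
      have := sq_sum_le_card_mul_sum_sq (s := (Finset.univ : Finset (Fin n))) (f := μ)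
      simp only [Finset.card_univ, Fintype.card_fin] at this
      rw [← htdef, ← hrdef] at this
      push_cast at this ⊢
      linarith
    have hcs := Finset.sum_mul_sq_le_sq_mul_sq Finset.univ
      (fun i => lam i - s / n) (fun i => μ i - t / n)
    have e1 : ∑ i, (lam i - s / n) * (μ i - t / n) = p - s * t / n := by
      have expand : ∀ i : Fin n, (lam i - s / n) * (μ i - t / n) =
          lam i * μ i - (t / n) * lam i - (s / n) * μ i + (s / n) * (t / n) := by
        intro i; ring
      rw [Finset.sum_congr rfl (fun i _ => expand i)]
      simp only [Finset.sum_add_distrib, Finset.sum_sub_distrib, ← Finset.mul_sum,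
        Finset.sum_const, Finset.card_univ, Fintype.card_fin, nsmul_eq_mul]
      rw [← hsdef, ← htdef, ← hpdef]
      field_simp
      ring
    have e2 : ∑ i, (lam i - s / n) ^ 2 = q - s ^ 2 / n := by
      have expand : ∀ i : Fin n, (lam i - s / n) ^ 2 =
          lam i ^ 2 - 2 * (s / n) * lam i + (s / n) ^ 2 := by intro i; ring
      rw [Finset.sum_congr rfl (fun i _ => expand i)]
      simp only [Finset.sum_add_distrib, Finset.sum_sub_distrib, ← Finset.mul_sum,
        Finset.sum_const, Finset.card_univ, Fintype.card_fin, nsmul_eq_mul]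
      rw [← hsdef, ← hqdef]
      field_simp
      ring
    have e3 : ∑ i, (μ i - t / n) ^ 2 = r - t ^ 2 / n := by
      have expand : ∀ i : Fin n, (μ i - t / n) ^ 2 =
          μ i ^ 2 - 2 * (t / n) * μ i + (t / n) ^ 2 := by intro i; ring
      rw [Finset.sum_congr rfl (fun i _ => expand i)]
      simp only [Finset.sum_add_distrib, Finset.sum_sub_distrib, ← Finset.mul_sum,
        Finset.sum_const, Finset.card_univ, Fintype.card_fin, nsmul_eq_mul]
      rw [← htdef, ← hrdef]
      field_simp
      ring
    rw [e1, e2, e3] at hcs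
    -- turn into integer-cleared form
    have hcs' : ((n:ℝ) * p - s * t) ^ 2 ≤ ((n:ℝ) * q - s ^ 2) * ((n:ℝ) * r - t ^ 2) := by
      have hid : ((n:ℝ) * p - s * t) ^ 2 = (n:ℝ) ^ 2 * (p - s * t / n) ^ 2 := by
        field_simp
      have hid2 : ((n:ℝ) * q - s ^ 2) * ((n:ℝ) * r - t ^ 2) =
          (n:ℝ) ^ 2 * ((q - s ^ 2 / n) * (r - t ^ 2 / n)) := by
        field_simp
      rw [hid, hid2]
      nlinarith [hcs, sq_nonneg (n:ℝ)]
    have h1 : (n:ℝ) * (((n:ℝ) - 1) * ((n:ℝ) * q - s ^ 2)) ≤ (n:ℝ) * s ^ 2 := by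
      nlinarith [mul_le_mul_of_nonneg_left hq (by positivity : (0:ℝ) ≤ (n:ℝ)^2)]
    have h2 : (n:ℝ) * ((n:ℝ) * r - t ^ 2) ≤ (n:ℝ) * (((n:ℝ) - 1) * t ^ 2) := by
      nlinarith [mul_le_mul_of_nonneg_left hrt (by positivity : (0:ℝ) ≤ (n:ℝ)^2)]
    have hAB : (n:ℝ) ^ 2 * (((n:ℝ) * q - s ^ 2) * ((n:ℝ) * r - t ^ 2)) * ((n:ℝ) - 1)
        ≤ (n:ℝ) ^ 2 * s ^ 2 * t ^ 2 * ((n:ℝ) - 1) := by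
      nlinarith [mul_le_mul h1 h2 (by positivity) (by positivity), hA, hB, hm, hnpos]
    have hAB' : ((n:ℝ) * q - s ^ 2) * ((n:ℝ) * r - t ^ 2) ≤ s ^ 2 * t ^ 2 := by
      nlinarith [hAB, hm, hnpos]
    have hfin : ((n:ℝ) * p - s * t) ^ 2 ≤ (s * t) ^ 2 := by nlinarith [hcs', hAB']
    clear_value s q t r p
    clear hcs e1 e2 e3 hμ hineq hrt hq hA hB hcs' h1 h2 hAB hAB'
    have hnp : 0 ≤ (n:ℝ) * p := by nlinarith [hfin, mul_nonneg hs ht]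
    nlinarith [hnp, hnpos]

end
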